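/- Let d ≥ 1 and let f : ℤ → ℚ be a function given by a polynomial of degree at most d. Suppose that f(m−1) = (−1)^d · f(−m) for every integer m. Define the power series D(X) = (1−X)^{d+1} · Σ_{m≥0} f(m) X^m in ℚ[[X]]. Then D is a polynomial of degree at most d, and its coefficients satisfy D_i = D_{d−i} for every 0 ≤ i ≤ d. -/

import Mathlib

open Finset PowerSeries Polynomial fwdDiff

/-- Iterated forward difference of the zero function is zero. -/
lemma fwdDiff_iter_zero_fun (n : ℕ) :
    (fwdDiff (1:ℤ))^[n] (0 : ℤ → ℚ) = 0 := by
  induction n with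
  | zero => rfl
  | succ k IH =>
    rw [Function.iterate_succ_apply]
    have h : fwdDiff (1:ℤ) (0 : ℤ → ℚ) = 0 := by
      funext x; simp [fwdDiff]
    rw [h, IH]

/-- The (deg+1)-st forward difference of a polynomial function vanishes. -/
lemma fwdDiff_iter_poly_eq_zero (n : ℕ) : ∀ (p : Polynomial ℚ), p.natDegree < n →
    (fwdDiff (1:ℤ))^[n] (fun x : ℤ => p.eval (x : ℚ)) = 0 := by
  induction n with
  | zero => intro p hp; omega
  | succ k IH =>
    intro p hp
    rw [Function.iterate_succ_apply]
    set q : Polynomial ℚ := p.comp (Polynomial.X + 1) - p with hq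
    have hstep : fwdDiff (1:ℤ) (fun x : ℤ => p.eval (x : ℚ))
        = fun x : ℤ => q.eval (x : ℚ) := by
      funext x
      simp only [fwdDiff, hq, Polynomial.eval_sub, Polynomial.eval_comp,
        Polynomial.eval_add, Polynomial.eval_X, Polynomial.eval_one]
      push_cast
      ring_nf
    rw [hstep]
    rcases Nat.eq_zero_or_pos p.natDegree with h0 | hpos
    · -- p is constant, so q = 0
      have hq0 : q = 0 := by
        rw [hq]
        conv_lhs => rw [Polynomial.eq_C_of_natDegree_eq_zero h0]
        simp
      rw [hq0]
      simpa [Pi.zero_def] using fwdDiff_iter_zero_fun k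
    · -- deg q < deg p
      have hX1 : (Polynomial.X + 1 : Polynomial ℚ).natDegree = 1 := by
        simpa using Polynomial.natDegree_X_add_C (1 : ℚ)
      have hcompdeg : (p.comp (Polynomial.X + 1)).natDegree = p.natDegree := by
        rw [Polynomial.natDegree_comp, hX1, mul_one]
      have hp0 : p ≠ 0 := fun h => by simp [h] at hpos
      have hcomp0 : p.comp (Polynomial.X + 1) ≠ 0 := fun h => by
        rw [h, Polynomial.natDegree_zero] at hcompdeg; omega
      have hlc : (p.comp (Polynomial.X + 1)).leadingCoeff = p.leadingCoeff := by
        rw [Polynomial.leadingCoeff_comp (by rw [hX1]; omega)]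
        have h1 : (Polynomial.X + 1 : Polynomial ℚ).leadingCoeff = 1 := by
          simpa using Polynomial.leadingCoeff_X_add_C (1 : ℚ)
        rw [h1, one_pow, mul_one]
      have hdeglt : q.degree < p.degree := by
        have h2 := Polynomial.degree_sub_lt
          (by rw [Polynomial.degree_eq_natDegree hcomp0, Polynomial.degree_eq_natDegree hp0,
            hcompdeg]) hcomp0 hlc
        calc q.degree < (p.comp (Polynomial.X + 1)).degree := h2
          _ = p.degree := by
            rw [Polynomial.degree_eq_natDegree hcomp0, Polynomial.degree_eq_natDegree hp0,
              hcompdeg]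
      have hqnd : q.natDegree < p.natDegree := by
        rcases eq_or_ne q 0 with hq0 | hq0
        · rw [hq0, Polynomial.natDegree_zero]; exact hpos
        · exact Polynomial.natDegree_lt_natDegree hq0 hdeglt
      exact IH q (by omega)

/-- Coefficients of `(1 - X)^n` in `ℚ⟦X⟧`. -/
lemma coeff_one_sub_X_pow (n i : ℕ) :
    PowerSeries.coeff i ((1 - PowerSeries.X) ^ n) = (-1 : ℚ) ^ i * n.choose i := by
  have h1 : ((1 - Polynomial.X : Polynomial ℚ) : PowerSeries ℚ) = 1 - PowerSeries.X := by
    simp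
  rw [← h1, ← Polynomial.coe_pow, Polynomial.coeff_coe]
  have h2 : (1 - Polynomial.X : Polynomial ℚ)
      = (-1) * (Polynomial.X + Polynomial.C (-1 : ℚ)) := by
    rw [Polynomial.C_neg, Polynomial.C_1]; ring
  have h3 : ((-1 : Polynomial ℚ) ^ n) = Polynomial.C ((-1 : ℚ) ^ n) := by
    simp
  rw [h2, mul_pow, h3, Polynomial.coeff_C_mul, Polynomial.coeff_X_add_C_pow]
  rcases le_or_gt i n with h | h
  · have he : n + (n - i) = i + 2 * (n - i) := by omega
    rw [← mul_assoc, ← pow_add, he, pow_add, pow_mul, neg_one_sq, one_pow, mul_one]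
  · rw [Nat.choose_eq_zero_of_lt h]; simp

/-- For `d ≥ 1` and a polynomial function `f : ℤ → ℚ` of degree at most `d`
satisfying `f (m-1) = (-1)^d * f (-m)` for all integers `m`, the power series
`D = (1 - X)^(d+1) * Σ_{m ≥ 0} f(m) X^m` is a polynomial of degree at most `d`
with symmetric coefficients `D_i = D_{d-i}`. -/
theorem stmt_0 (d : ℕ) (hd : 1 ≤ d) (f : ℤ → ℚ) (p : Polynomial ℚ)
    (hdeg : p.natDegree ≤ d) (hf : ∀ m : ℤ, f m = p.eval (m : ℚ))
    (hsym : ∀ m : ℤ, f (m - 1) = (-1 : ℚ) ^ d * f (-m)) :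
    (∀ i : ℕ, d < i →
      PowerSeries.coeff i
        ((1 - PowerSeries.X) ^ (d + 1) * PowerSeries.mk fun m : ℕ => f (m : ℤ)) = 0) ∧
    (∀ i : ℕ, i ≤ d →
      PowerSeries.coeff i
        ((1 - PowerSeries.X) ^ (d + 1) * PowerSeries.mk fun m : ℕ => f (m : ℤ)) =
      PowerSeries.coeff (d - i)
        ((1 - PowerSeries.X) ^ (d + 1) * PowerSeries.mk fun m : ℕ => f (m : ℤ))) := by
  have hfg : (fun x : ℤ => p.eval (x : ℚ)) = f := funext fun x => (hf x).symm
  -- The key identity: the (d+1)-st backward difference of f vanishes everywhere.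
  have key : ∀ i : ℤ,
      ∑ j ∈ range (d + 2), (-1 : ℚ) ^ j * ((d + 1).choose j) * f (i - j) = 0 := by
    intro i
    have hzero : (fwdDiff (1:ℤ))^[d+1] f = 0 := by
      rw [← hfg]
      exact fwdDiff_iter_poly_eq_zero (d + 1) p (by omega)
    have h0 : (0 : ℚ) = ∑ k ∈ range (d + 2),
        ((-1 : ℤ) ^ (d + 1 - k) * ((d + 1).choose k)) • f (i - (d + 1) + k • (1 : ℤ)) := by
      rw [← fwdDiff_iter_eq_sum_shift (1 : ℤ) f (d + 1) (i - (d + 1)), hzero]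
      rfl
    have h1 : (0 : ℚ) = ∑ k ∈ range (d + 2),
        (-1 : ℚ) ^ (d + 1 - k) * ((d + 1).choose k) * f (i - (d + 1) + k) := by
      rw [h0]
      refine Finset.sum_congr rfl fun k _ => ?_
      push_cast [zsmul_eq_mul, nsmul_eq_mul]
      norm_num
    set F : ℕ → ℚ := fun k => (-1 : ℚ) ^ (d + 1 - k) * ((d + 1).choose k) * f (i - (d + 1) + k)
      with hF
    have hrefl : ∑ j ∈ range (d + 2), F (d + 1 - j) = ∑ j ∈ range (d + 2), F j := by
      rw [← Finset.sum_range_reflect F (d + 2)]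
      exact Finset.sum_congr rfl fun j hj => by congr 1 <;> omega
    calc ∑ j ∈ range (d + 2), (-1 : ℚ) ^ j * ((d + 1).choose j) * f (i - j)
        = ∑ j ∈ range (d + 2), F (d + 1 - j) := by
          refine Finset.sum_congr rfl fun j hj => ?_
          have hj' : j ≤ d + 1 := by simp only [Finset.mem_range] at hj; omega
          rw [hF]
          simp only []
          rw [Nat.sub_sub_self hj', Nat.choose_symm hj']
          congr 2
          push_cast [Nat.cast_sub hj']
          ring
      _ = ∑ j ∈ range (d + 2), F j := hrefl
      _ = 0 := by rw [← h1]
  -- The coefficient formula for D.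
  have hD : ∀ n : ℕ,
      PowerSeries.coeff n
        ((1 - PowerSeries.X) ^ (d + 1) * PowerSeries.mk fun m : ℕ => f (m : ℤ))
      = ∑ j ∈ range (n + 1), (-1 : ℚ) ^ j * ((d + 1).choose j) * f ((n : ℤ) - j) := by
    intro n
    rw [PowerSeries.coeff_mul, Finset.Nat.sum_antidiagonal_eq_sum_range_succ_mk]
    refine Finset.sum_congr rfl fun j hj => ?_
    have hj' : j ≤ n := by simp only [Finset.mem_range] at hj; omega
    rw [PowerSeries.coeff_mk, coeff_one_sub_X_pow]
    have harg : ((n - j : ℕ) : ℤ) = (n : ℤ) - j := by omega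
    rw [harg, mul_assoc]
  constructor
  · -- vanishing for i > d
    intro i hi
    rw [hD i]
    rw [← Finset.sum_subset (Finset.range_subset_range.mpr (by omega : d + 2 ≤ i + 1))
      (fun x _ hx => ?_)]
    · exact key (i : ℤ)
    · have hx' : d + 1 < x := by simp only [Finset.mem_range] at hx ⊢; omega
      rw [Nat.choose_eq_zero_of_lt hx']
      simp
  · -- symmetry
    intro i hi
    rw [hD i, hD (d - i)]
    set F : ℕ → ℚ := fun j => (-1 : ℚ) ^ j * ((d + 1).choose j) * f ((i : ℤ) - j) with hF
    set G : ℕ → ℚ := fun j => (-1 : ℚ) ^ j * ((d + 1).choose j) * f (((d - i : ℕ) : ℤ) - j)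
      with hG
    have hsplit : ∑ j ∈ range (d + 2), F j
        = (∑ j ∈ range (i + 1), F j) + ∑ k ∈ range (d + 1 - i), F (i + 1 + k) := by
      rw [show d + 2 = (i + 1) + (d + 1 - i) by omega, Finset.sum_range_add]
    have hkey := key (i : ℤ)
    have hL : ∑ j ∈ range (i + 1), F j = -∑ k ∈ range (d + 1 - i), F (i + 1 + k) := by
      have : (∑ j ∈ range (i + 1), F j) + ∑ k ∈ range (d + 1 - i), F (i + 1 + k) = 0 := by
        rw [← hsplit]; exact hkey
      linarith
    have hGrefl : ∑ j ∈ range (d - i + 1), G j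
        = ∑ k ∈ range (d - i + 1), G (d - i - k) := by
      rw [← Finset.sum_range_reflect G (d - i + 1)]
      exact Finset.sum_congr rfl fun j hj => by congr 1 <;> omega
    have hterm : ∀ k ∈ range (d + 1 - i), -F (i + 1 + k) = G (d - i - k) := by
      intro k hk
      have hk' : k ≤ d - i := by simp only [Finset.mem_range] at hk; omega
      have harg1 : (i : ℤ) - ((i + 1 + k : ℕ) : ℤ) = -((k : ℤ) + 1) := by push_cast; ring
      have harg2 : ((d - i : ℕ) : ℤ) - ((d - i - k : ℕ) : ℤ) = (k : ℤ) := by omega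
      have hfk : f (k : ℤ) = (-1 : ℚ) ^ d * f (-((k : ℤ) + 1)) := by
        have := hsym ((k : ℤ) + 1)
        simpa using this
      have hC : (d + 1).choose (d - i - k) = (d + 1).choose (i + 1 + k) := by
        rw [← Nat.choose_symm (by omega : i + 1 + k ≤ d + 1)]
        congr 1; omega
      have hsgn : (-1 : ℚ) ^ (d - i - k) * (-1 : ℚ) ^ d = (-1 : ℚ) ^ (i + k) := by
        have h2 : (d - i - k) + d = (i + k) + 2 * (d - i - k) := by omega
        rw [← pow_add, h2, pow_add, pow_mul, neg_one_sq, one_pow, mul_one]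
      rw [hF, hG]
      simp only []
      rw [harg1, harg2, hfk, hC]
      push_cast
      linear_combination (-((d + 1).choose (i + 1 + k) : ℚ) * f (-((k : ℤ) + 1))) * hsgn
    calc ∑ j ∈ range (i + 1), F j
        = -∑ k ∈ range (d + 1 - i), F (i + 1 + k) := hL
      _ = ∑ k ∈ range (d + 1 - i), -F (i + 1 + k) := by rw [Finset.sum_neg_distrib]
      _ = ∑ k ∈ range (d + 1 - i), G (d - i - k) := Finset.sum_congr rfl hterm
      _ = ∑ k ∈ range (d - i + 1), G (d - i - k) := by
          rw [show d + 1 - i = d - i + 1 from by omega]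
      _ = ∑ j ∈ range (d - i + 1), G j := hGrefl.symm
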